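/- arXiv:1404.0065 — 4 statements merged into one kernel-verified Lean document; each statement's English description precedes it below -/
import Mathlib

section
/- Let 𝓛 be a finite family of linear subspaces of a finite-dimensional real vector space V, closed under pairwise sum. Then there is a unique function ρ : 𝓛 → ℝ such that the indicator function of ⋃_{L ∈ 𝓛} L^⊥ ⊆ V* equals ∑_{L ∈ 𝓛} ρ(L)·[L^⊥], where [·] denotes indicator functions and L^⊥ = {ξ ∈ V* : ξ|_L = 0}. -/
open scoped Classical

section aux

variable {V : Type*} [AddCommGroup V] [Module ℝ V]

/-- A subspace is not covered by finitely many subspaces none of which contains it. -/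
lemma aux_not_covered {D : Type*} [AddCommGroup D] [Module ℝ D] (W : Submodule ℝ D)
    (s : Finset (Submodule ℝ D)) (h : ∀ p ∈ s, ¬ W ≤ p) :
    ∃ ξ ∈ W, ∀ p ∈ s, ξ ∉ p := by
  by_contra hc
  push_neg at hc
  have hcover : ⋃ p ∈ s.image (Submodule.comap W.subtype), ((p : Submodule ℝ W) : Set W)
      = Set.univ := by
    ext x
    simp only [Set.mem_iUnion, Set.mem_univ, iff_true, Finset.mem_image]
    obtain ⟨p, hp, hxp⟩ := hc x x.2
    exact ⟨Submodule.comap W.subtype p, ⟨p, hp, rfl⟩, hxp⟩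
  have htop := Subspace.top_mem_of_biUnion_eq_univ hcover
  obtain ⟨p, hp, hpe⟩ := Finset.mem_image.mp htop
  exact h p hp (Submodule.comap_subtype_eq_top.mp hpe)

noncomputable def aux_f (L : Submodule ℝ V) (ξ : Module.Dual ℝ V) : ℝ :=
  if ξ ∈ L.dualAnnihilator then 1 else 0

lemma aux_f_sup (L M : Submodule ℝ V) (ξ : Module.Dual ℝ V) :
    aux_f (L ⊔ M) ξ = aux_f L ξ * aux_f M ξ := by
  unfold aux_f
  rw [Submodule.dualAnnihilator_sup_eq]
  by_cases h1 : ξ ∈ L.dualAnnihilator <;> by_cases h2 : ξ ∈ M.dualAnnihilator <;>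
    simp [Submodule.mem_inf, h1, h2]

/-- Existence, by strong induction on the subfamily. -/
lemma aux_exists (𝓛 : Finset (Submodule ℝ V))
    (hclosed : ∀ L₁ ∈ 𝓛, ∀ L₂ ∈ 𝓛, L₁ ⊔ L₂ ∈ 𝓛) :
    ∀ n (s : Finset (Submodule ℝ V)), s.card ≤ n → s ⊆ 𝓛 →
      ∃ ρ : 𝓛 → ℝ, ∀ ξ : Module.Dual ℝ V,
        (if ξ ∈ ⋃ L ∈ s, ((L.dualAnnihilator : Submodule ℝ (Module.Dual ℝ V)) :
            Set (Module.Dual ℝ V)) then (1:ℝ) else 0) = ∑ L : 𝓛, ρ L * aux_f (L : Submodule ℝ V) ξ := by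
  intro n
  induction n with
  | zero =>
    intro s hcard _
    refine ⟨0, fun ξ => ?_⟩
    have : s = ∅ := Finset.card_eq_zero.mp (Nat.le_zero.mp hcard)
    simp [this]
  | succ n ih =>
    intro s hcard hsub
    rcases s.eq_empty_or_nonempty with rfl | ⟨L, hL⟩
    · refine ⟨0, fun ξ => ?_⟩; simp
    · have hL𝓛 : L ∈ 𝓛 := hsub hL
      set t := s.erase L with ht
      have htcard : t.card ≤ n := by
        have h1 : 0 < s.card := Finset.card_pos.mpr ⟨L, hL⟩
        have h2 : t.card = s.card - 1 := by rw [ht]; exact Finset.card_erase_of_mem hL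
        omega
      have htsub : t ⊆ 𝓛 := fun x hx => hsub (Finset.mem_of_mem_erase hx)
      obtain ⟨ρ₁, hρ₁⟩ := ih t htcard htsub
      set u := t.image (fun M => L ⊔ M) with hu
      have hucard : u.card ≤ n := le_trans (Finset.card_image_le) htcard
      have husub : u ⊆ 𝓛 := by
        intro x hx
        obtain ⟨M, hM, rfl⟩ := Finset.mem_image.mp hx
        exact hclosed L hL𝓛 M (htsub hM)
      obtain ⟨ρ₂, hρ₂⟩ := ih u hucard husub
      refine ⟨fun M => (if (M : Submodule ℝ V) = L then 1 else 0) + ρ₁ M - ρ₂ M, fun ξ => ?_⟩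
      have hdelta : ∑ M : 𝓛, (if (M : Submodule ℝ V) = L then (1:ℝ) else 0) *
          aux_f (M : Submodule ℝ V) ξ = aux_f L ξ := by
        rw [Finset.sum_eq_single_of_mem (⟨L, hL𝓛⟩ : 𝓛) (Finset.mem_univ _)]
        · simp
        · intro M _ hML
          have : (M : Submodule ℝ V) ≠ L := fun h => hML (Subtype.ext h)
          simp [this]
      have key : (if ξ ∈ ⋃ L ∈ s, ((L.dualAnnihilator : Submodule ℝ (Module.Dual ℝ V)) :
            Set (Module.Dual ℝ V)) then (1:ℝ) else 0)
          = aux_f L ξ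
            + (if ξ ∈ ⋃ M ∈ t, ((M.dualAnnihilator : Submodule ℝ (Module.Dual ℝ V)) :
                Set (Module.Dual ℝ V)) then (1:ℝ) else 0)
            - (if ξ ∈ ⋃ M ∈ u, ((M.dualAnnihilator : Submodule ℝ (Module.Dual ℝ V)) :
                Set (Module.Dual ℝ V)) then (1:ℝ) else 0) := by
        have hsit : s = insert L t := by rw [ht, Finset.insert_erase hL]
        have hiff : (ξ ∈ ⋃ M ∈ s, ((M.dualAnnihilator : Submodule ℝ (Module.Dual ℝ V)) :
            Set (Module.Dual ℝ V)))
            ↔ ξ ∈ L.dualAnnihilator ∨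
              (ξ ∈ ⋃ M ∈ t, ((M.dualAnnihilator : Submodule ℝ (Module.Dual ℝ V)) :
                Set (Module.Dual ℝ V))) := by
          rw [hsit, Finset.set_biUnion_insert, Set.mem_union]
          simp
        have huiff : (ξ ∈ ⋃ M ∈ u, ((M.dualAnnihilator : Submodule ℝ (Module.Dual ℝ V)) :
            Set (Module.Dual ℝ V)))
            ↔ ξ ∈ L.dualAnnihilator ∧
              (ξ ∈ ⋃ M ∈ t, ((M.dualAnnihilator : Submodule ℝ (Module.Dual ℝ V)) :
                Set (Module.Dual ℝ V))) := by
          simp only [Set.mem_iUnion, SetLike.mem_coe, exists_prop]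
          constructor
          · rintro ⟨P, hP, hξP⟩
            obtain ⟨M, hM, rfl⟩ := Finset.mem_image.mp hP
            rw [Submodule.dualAnnihilator_sup_eq, Submodule.mem_inf] at hξP
            exact ⟨hξP.1, M, hM, hξP.2⟩
          · rintro ⟨h1, M, hM, h2⟩
            refine ⟨L ⊔ M, Finset.mem_image_of_mem _ hM, ?_⟩
            rw [Submodule.dualAnnihilator_sup_eq, Submodule.mem_inf]
            exact ⟨h1, h2⟩
        unfold aux_f
        by_cases h1 : ξ ∈ L.dualAnnihilator <;>
          by_cases h2 : ξ ∈ ⋃ M ∈ t, ((M.dualAnnihilator : Submodule ℝ (Module.Dual ℝ V)) :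
              Set (Module.Dual ℝ V)) <;>
          simp [hiff, huiff, h1, h2]
      rw [key, hρ₁ ξ, hρ₂ ξ, ← hdelta, ← Finset.sum_add_distrib, ← Finset.sum_sub_distrib]
      refine Finset.sum_congr rfl (fun M _ => ?_)
      show (if (M : Submodule ℝ V) = L then (1:ℝ) else 0) * aux_f (M : Submodule ℝ V) ξ
          + ρ₁ M * aux_f (M : Submodule ℝ V) ξ - ρ₂ M * aux_f (M : Submodule ℝ V) ξ
        = ((if (M : Submodule ℝ V) = L then (1:ℝ) else 0) + ρ₁ M - ρ₂ M)
            * aux_f (M : Submodule ℝ V) ξ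
      ring

/-- Linear independence of the indicator functions of distinct annihilators. -/
lemma aux_indep (𝓛 : Finset (Submodule ℝ V)) (c : 𝓛 → ℝ)
    (h : ∀ ξ : Module.Dual ℝ V, ∑ L : 𝓛, c L * aux_f (L : Submodule ℝ V) ξ = 0) :
    ∀ L, c L = 0 := by
  by_contra hc
  push_neg at hc
  set S : Finset 𝓛 := Finset.univ.filter (fun L => c L ≠ 0) with hS
  have hSne : S.Nonempty := by
    obtain ⟨L, hL⟩ := hc
    exact ⟨L, by simp [hS, hL]⟩
  obtain ⟨M, hMS, hMmin⟩ := S.exists_minimal hSne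
  -- the annihilators of the other elements of S do not contain M's annihilator
  set s : Finset (Submodule ℝ (Module.Dual ℝ V)) :=
    (S.erase M).image (fun L : {x // x ∈ 𝓛} => (L : Submodule ℝ V).dualAnnihilator) with hs
  have hnotle : ∀ p ∈ s, ¬ ((M : Submodule ℝ V).dualAnnihilator ≤ p) := by
    intro p hp hle
    obtain ⟨L, hL, rfl⟩ := Finset.mem_image.mp hp
    rw [Subspace.dualAnnihilator_le_dualAnnihilator_iff] at hle
    have hLM : L ≠ M := Finset.ne_of_mem_erase hL
    have : L < M := lt_of_le_of_ne (by exact_mod_cast hle) hLM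
    exact lt_irrefl L (lt_of_lt_of_le this (hMmin (Finset.mem_of_mem_erase hL) this.le))
  obtain ⟨ξ, hξM, hξ⟩ := aux_not_covered _ s hnotle
  have hsum := h ξ
  rw [Finset.sum_eq_single_of_mem M (Finset.mem_univ _)] at hsum
  · have : aux_f (M : Submodule ℝ V) ξ = 1 := by simp [aux_f, hξM]
    rw [this, mul_one] at hsum
    exact (Finset.mem_filter.mp hMS).2 hsum
  · intro L _ hLM
    by_cases hLS : L ∈ S
    · have hξL : ξ ∉ (L : Submodule ℝ V).dualAnnihilator := by
        apply hξ
        exact Finset.mem_image_of_mem _ (Finset.mem_erase.mpr ⟨hLM, hLS⟩)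
      simp [aux_f, hξL]
    · have : c L = 0 := by
        by_contra h'
        exact hLS (Finset.mem_filter.mpr ⟨Finset.mem_univ _, h'⟩)
      simp [this]

end aux

/- For a finite family `𝓛` of subspaces of a finite-dimensional real vector space,
closed under pairwise sum, there is a unique `ρ : 𝓛 → ℝ` with
`[⋃_{L∈𝓛} L^⊥] = ∑_{L∈𝓛} ρ(L)·[L^⊥]` on the dual space. -/
theorem stmt_7 {V : Type*} [AddCommGroup V] [Module ℝ V] [FiniteDimensional ℝ V]
    (𝓛 : Finset (Submodule ℝ V))
    (hclosed : ∀ L₁ ∈ 𝓛, ∀ L₂ ∈ 𝓛, L₁ ⊔ L₂ ∈ 𝓛) :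
    ∃! ρ : 𝓛 → ℝ, ∀ ξ : Module.Dual ℝ V,
      (if ξ ∈ ⋃ L ∈ 𝓛, ((Submodule.dualAnnihilator L : Submodule ℝ (Module.Dual ℝ V)) :
            Set (Module.Dual ℝ V)) then (1:ℝ) else 0)
        = ∑ L : 𝓛, ρ L *
            (if ξ ∈ (L : Submodule ℝ V).dualAnnihilator then (1:ℝ) else 0) := by
  obtain ⟨ρ, hρ⟩ := aux_exists 𝓛 hclosed 𝓛.card 𝓛 le_rfl (subset_refl _)
  refine ⟨ρ, fun ξ => hρ ξ, fun ρ' hρ' => ?_⟩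
  have hdiff : ∀ ξ : Module.Dual ℝ V,
      ∑ L : 𝓛, (ρ' L - ρ L) * aux_f (L : Submodule ℝ V) ξ = 0 := by
    intro ξ
    have h1 := hρ' ξ
    have h2 := hρ ξ
    simp only [sub_mul, Finset.sum_sub_distrib]
    simp only [aux_f] at h2 ⊢
    rw [← h1, ← h2, sub_self]
  have h := aux_indep 𝓛 (fun L => ρ' L - ρ L) hdiff
  funext L
  have h0 : ρ' L - ρ L = 0 := h L
  linarith
end

section
/- Let v₁, …, v_d be a ℤ-basis of ℤ^d with dual basis η₁, …, η_d, let c = cone(v₁,…,v_d) and b = ∑_i [0,1)·v_i the semi-open fundamental cell. Then for every s ∈ ℝ^d, the set (s + c) ∩ ℤ^d equals the set of points ∑_i n_i v_i with n_i ∈ ℤ, n_i ≥ ⌈⟨η_i, s⟩⌉ for all i; consequently, for ξ with ⟨ξ, v_i⟩ < 0 for all i, ∑_{x ∈ (s+c) ∩ ℤ^d} e^{⟨ξ,x⟩} = e^{⟨ξ,s⟩} · ∏_{i=1}^d e^{{-⟨η_i,s⟩}⟨ξ,v_i⟩}/(1 - e^{⟨ξ,v_i⟩}). -/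
open scoped Classical
open Matrix

lemma aux_geom (a : ℝ) (ha : a < 0) (k : ℤ) :
    HasSum (fun n : ℕ => Real.exp ((k + n) * a)) (Real.exp (k * a) / (1 - Real.exp a)) := by
  have h0 : (0:ℝ) ≤ Real.exp a := (Real.exp_pos a).le
  have h1 : Real.exp a < 1 := Real.exp_lt_one_iff.mpr ha
  have H := (hasSum_geometric_of_lt_one h0 h1).mul_left (Real.exp ((k:ℝ) * a))
  rw [div_eq_mul_inv]
  have hf : (fun n : ℕ => Real.exp ((k + n) * a)) = fun n => Real.exp ((k:ℝ) * a) * Real.exp a ^ n := by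
    funext n
    rw [← Real.exp_nat_mul, ← Real.exp_add, add_mul]
  rw [hf]
  exact H

lemma aux_pi : ∀ (d : ℕ) (f : Fin d → ℕ → ℝ) (S : Fin d → ℝ),
    (∀ i n, 0 ≤ f i n) → (∀ i, HasSum (f i) (S i)) →
    HasSum (fun m : Fin d → ℕ => ∏ i, f i (m i)) (∏ i, S i) := by
  intro d
  induction d with
  | zero =>
    intro f S _ _
    simp only [Fin.prod_univ_zero]
    simpa using hasSum_single (f := fun _ : Fin 0 → ℕ => (1:ℝ)) default
      (fun b hb => absurd (Subsingleton.elim b default) hb)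
  | succ d ih =>
    intro f S h0 hS
    have tail : HasSum (fun m : Fin d → ℕ => ∏ i : Fin d, f i.succ (m i))
        (∏ i : Fin d, S i.succ) :=
      ih (fun i => f i.succ) (fun i => S i.succ) (fun i n => h0 i.succ n) (fun i => hS i.succ)
    have hsum : Summable (fun p : ℕ × (Fin d → ℕ) => f 0 p.1 * ∏ i : Fin d, f i.succ (p.2 i)) := by
      apply Summable.mul_of_nonneg (hS 0).summable tail.summable
      · exact fun n => h0 0 n
      · exact fun m => Finset.prod_nonneg fun i _ => h0 i.succ (m i)
    have hmul : HasSum (fun p : ℕ × (Fin d → ℕ) => f 0 p.1 * ∏ i : Fin d, f i.succ (p.2 i))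
        (S 0 * ∏ i : Fin d, S i.succ) := by
      apply HasSum.mul (hS 0) tail hsum
    have key : HasSum ((fun p : ℕ × (Fin d → ℕ) => f 0 p.1 * ∏ i : Fin d, f i.succ (p.2 i)) ∘
        (Fin.consEquiv fun _ => ℕ).symm) (S 0 * ∏ i : Fin d, S i.succ) := (Equiv.hasSum_iff _).mpr hmul
    have hfe : (fun m : Fin (d+1) → ℕ => ∏ i, f i (m i)) =
        ((fun p : ℕ × (Fin d → ℕ) => f 0 p.1 * ∏ i : Fin d, f i.succ (p.2 i)) ∘
          (Fin.consEquiv fun _ => ℕ).symm) := by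
      funext m
      simp [Fin.consEquiv, Fin.prod_univ_succ, Fin.tail]
    rw [Fin.prod_univ_succ, hfe]
    exact key

lemma aux_dual (d : ℕ) (v : Fin d → Fin d → ℤ)
    (hbasis : IsUnit (Matrix.det (Matrix.of fun i j => v i j)))
    (η : Fin d → Fin d → ℝ)
    (hdual : ∀ i j, (∑ l, η i l * (v j l : ℝ)) = if i = j then (1:ℝ) else 0) :
    (∃ N : Fin d → Fin d → ℤ, ∀ i l, η i l = (N l i : ℝ)) ∧
    (∀ x : Fin d → ℝ, ∀ l, x l = ∑ i, (∑ l', η i l' * x l') * (v i l : ℝ)) := by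
  classical
  set M : Matrix (Fin d) (Fin d) ℤ := Matrix.of fun i j => v i j with hMdef
  have hU : IsUnit M := (Matrix.isUnit_iff_isUnit_det M).mpr hbasis
  obtain ⟨u, hu⟩ := hU
  set N : Matrix (Fin d) (Fin d) ℤ := ((u⁻¹ : (Matrix (Fin d) (Fin d) ℤ)ˣ) : Matrix (Fin d) (Fin d) ℤ) with hNdef
  have hMN : M * N = 1 := by rw [← hu]; exact u.mul_inv
  have hNM : N * M = 1 := by rw [← hu]; exact u.inv_mul
  set Vc : Matrix (Fin d) (Fin d) ℝ := M.map (Int.cast : ℤ → ℝ) with hVcdef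
  set Nc : Matrix (Fin d) (Fin d) ℝ := N.map (Int.cast : ℤ → ℝ) with hNcdef
  have hmap : ∀ A B : Matrix (Fin d) (Fin d) ℤ, A * B = 1 →
      A.map (Int.cast : ℤ → ℝ) * B.map (Int.cast : ℤ → ℝ) = 1 := by
    intro A B hAB
    have h1 : (A * B).map ⇑(Int.castRingHom ℝ) =
        A.map ⇑(Int.castRingHom ℝ) * B.map ⇑(Int.castRingHom ℝ) := Matrix.map_mul
    rw [hAB, Matrix.map_one _ (by simp) (by simp)] at h1
    simpa [Int.coe_castRingHom] using h1.symm
  have hMNc : Vc * Nc = 1 := hmap _ _ hMN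
  have hNMc : Nc * Vc = 1 := hmap _ _ hNM
  set E : Matrix (Fin d) (Fin d) ℝ := Matrix.of fun i l => η i l with hEdef
  have hEV : E * Vcᵀ = 1 := by
    ext i j
    simp only [Matrix.mul_apply, Matrix.transpose_apply, Matrix.one_apply, hEdef, hVcdef,
      Matrix.of_apply, Matrix.map_apply, hMdef]
    exact hdual i j
  have h2 : Vcᵀ * Ncᵀ = 1 := by
    rw [← Matrix.transpose_mul, hNMc, Matrix.transpose_one]
  have hE : E = Ncᵀ := by
    calc E = E * (Vcᵀ * Ncᵀ) := by rw [h2, mul_one]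
    _ = (E * Vcᵀ) * Ncᵀ := by rw [mul_assoc]
    _ = Ncᵀ := by rw [hEV, one_mul]
  constructor
  · refine ⟨fun l i => N l i, fun i l => ?_⟩
    have := congrFun (congrFun hE i) l
    simpa [hEdef, hNcdef, Matrix.transpose_apply, Matrix.map_apply] using this
  · intro x l
    have hVE : Vcᵀ * E = 1 := mul_eq_one_comm.mp hEV
    have hentry : ∀ l', (∑ i, (v i l : ℝ) * η i l') = if l = l' then (1:ℝ) else 0 := by
      intro l'
      have := congrFun (congrFun hVE l) l'
      simpa [Matrix.mul_apply, Matrix.transpose_apply, Matrix.one_apply, hEdef, hVcdef,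
        Matrix.map_apply, hMdef] using this
    calc x l = ∑ l', (if l = l' then (1:ℝ) else 0) * x l' := by
          simp [Finset.sum_ite_eq]
    _ = ∑ l', (∑ i, (v i l : ℝ) * η i l') * x l' := by
          simp only [hentry]
    _ = ∑ l', ∑ i, η i l' * x l' * (v i l : ℝ) := by
          congr 1; funext l'; rw [Finset.sum_mul]; congr 1; funext i; ring
    _ = ∑ i, (∑ l', η i l' * x l') * (v i l : ℝ) := by
          rw [Finset.sum_comm]; congr 1; funext i; rw [Finset.sum_mul]


/- Let `v₁,…,v_d` be a ℤ-basis of `ℤ^d` (unimodular cone generators) with dual basis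
`η₁,…,η_d`. Then `(s + c) ∩ ℤ^d = {∑ nᵢ vᵢ : nᵢ ≥ ⌈⟨ηᵢ,s⟩⌉}`, and for `ξ` with
`⟨ξ,vᵢ⟩ < 0` the lattice-point generating series of `s + c` equals
`e^{⟨ξ,s⟩} ∏ᵢ e^{{-⟨ηᵢ,s⟩}⟨ξ,vᵢ⟩}/(1 - e^{⟨ξ,vᵢ⟩})`. -/
theorem stmt_14 (d : ℕ) (v : Fin d → Fin d → ℤ)
    (hbasis : IsUnit (Matrix.det (Matrix.of fun i j => v i j)))
    (η : Fin d → Fin d → ℝ)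
    (hdual : ∀ i j, (∑ l, η i l * (v j l : ℝ)) = if i = j then (1:ℝ) else 0)
    (s : Fin d → ℝ) :
    ({x : Fin d → ℝ |
        (∃ c : Fin d → ℝ, (∀ i, 0 ≤ c i) ∧
          x = s + ∑ i, c i • (fun l => (v i l : ℝ))) ∧
        ∀ l, ∃ m : ℤ, x l = (m : ℝ)}
      = {x : Fin d → ℝ | ∃ n : Fin d → ℤ,
          (∀ i, ⌈∑ l, η i l * s l⌉ ≤ n i) ∧
          x = ∑ i, (n i : ℝ) • (fun l => (v i l : ℝ))}) ∧
    ∀ ξ : Fin d → ℝ, (∀ i, (∑ l, ξ l * (v i l : ℝ)) < 0) →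
      HasSum
        (fun n : {n : Fin d → ℤ // ∀ i, ⌈∑ l, η i l * s l⌉ ≤ n i} =>
          Real.exp (∑ l, ξ l * (∑ i, (n.1 i : ℝ) * (v i l : ℝ))))
        (Real.exp (∑ l, ξ l * s l) *
          ∏ i, Real.exp (Int.fract (-(∑ l, η i l * s l)) * (∑ l, ξ l * (v i l : ℝ))) /
            (1 - Real.exp (∑ l, ξ l * (v i l : ℝ)))) := by
  obtain ⟨⟨N, hN⟩, hrec⟩ := aux_dual d v hbasis η hdual
  -- notation
  set σ : Fin d → ℝ := fun i => ∑ l, η i l * s l with hσdef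
  set k : Fin d → ℤ := fun i => ⌈σ i⌉ with hkdef
  -- dual pairing of an expansion ∑ cᵢ vᵢ
  have hpair : ∀ (i : Fin d) (c : Fin d → ℝ),
      (∑ l, η i l * ∑ j, c j * (v j l : ℝ)) = c i := by
    intro i c
    calc (∑ l, η i l * ∑ j, c j * (v j l : ℝ))
        = ∑ l, ∑ j, c j * (η i l * (v j l : ℝ)) := by
          congr 1; funext l; rw [Finset.mul_sum]; congr 1; funext j; ring
    _ = ∑ j, c j * ∑ l, η i l * (v j l : ℝ) := by
          rw [Finset.sum_comm]; congr 1; funext j; rw [Finset.mul_sum]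
    _ = c i := by simp [hdual]
  constructor
  · -- set equality
    ext x
    simp only [Set.mem_setOf_eq]
    constructor
    · rintro ⟨⟨c, hc0, hx⟩, hint⟩
      choose m hm using hint
      have hxl : ∀ l, x l = s l + ∑ j, c j * (v j l : ℝ) := by
        intro l
        rw [hx]
        simp [Finset.sum_apply]
      refine ⟨fun i => ∑ l, N l i * m l, ?_, ?_⟩
      · intro i
        have ha : (∑ l, η i l * x l) = ((∑ l, N l i * m l : ℤ) : ℝ) := by
          push_cast
          exact Finset.sum_congr rfl fun l _ => by rw [hN i l, hm l]
        have hb : (∑ l, η i l * x l) = σ i + c i := by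
          calc (∑ l, η i l * x l)
              = ∑ l, (η i l * s l + η i l * ∑ j, c j * (v j l : ℝ)) := by
                congr 1; funext l; rw [hxl l]; ring
          _ = σ i + ∑ l, η i l * ∑ j, c j * (v j l : ℝ) := by
                rw [Finset.sum_add_distrib]
          _ = σ i + c i := by rw [hpair i c]
        rw [Int.ceil_le, ← ha, hb]
        exact le_add_of_nonneg_right (hc0 i)
      · funext l
        have := hrec x l
        rw [this]
        have hco : ∀ i, (∑ l', η i l' * x l') = ((∑ l', N l' i * m l' : ℤ) : ℝ) := by
          intro i
          push_cast
          exact Finset.sum_congr rfl fun l' _ => by rw [hN i l', hm l']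
        simp only [Finset.sum_apply, Pi.smul_apply, smul_eq_mul]
        exact Finset.sum_congr rfl fun i _ => by rw [hco i]
    · rintro ⟨n, hn, hx⟩
      have hxl : ∀ l, x l = ∑ i, (n i : ℝ) * (v i l : ℝ) := by
        intro l
        rw [hx]
        simp [Finset.sum_apply]
      have hsl : ∀ l, s l = ∑ i, σ i * (v i l : ℝ) := fun l => hrec s l
      have hσn : ∀ i, σ i ≤ (n i : ℝ) := by
        intro i
        exact le_trans (Int.le_ceil (σ i)) (by exact_mod_cast hn i)
      refine ⟨⟨fun i => (n i : ℝ) - σ i, fun i => sub_nonneg.mpr (hσn i), ?_⟩, ?_⟩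
      · funext l
        simp only [Pi.add_apply, Finset.sum_apply, Pi.smul_apply, smul_eq_mul]
        rw [hxl l, hsl l]
        rw [show (∑ i, ((n i : ℝ) - σ i) * (v i l : ℝ))
            = (∑ i, (n i : ℝ) * (v i l : ℝ)) - ∑ i, σ i * (v i l : ℝ) by
          rw [← Finset.sum_sub_distrib]; congr 1; funext i; ring]
        ring
      · intro l
        refine ⟨∑ i, n i * v i l, ?_⟩
        rw [hxl l]
        push_cast
        rfl
  · -- generating function
    intro ξ hξ
    set a : Fin d → ℝ := fun i => ∑ l, ξ l * (v i l : ℝ) with hadef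
    have hswap : ∀ c : Fin d → ℝ,
        (∑ l, ξ l * ∑ i, c i * (v i l : ℝ)) = ∑ i, c i * a i := by
      intro c
      calc (∑ l, ξ l * ∑ i, c i * (v i l : ℝ))
          = ∑ l, ∑ i, c i * (ξ l * (v i l : ℝ)) := by
            congr 1; funext l; rw [Finset.mul_sum]; congr 1; funext i; ring
      _ = ∑ i, c i * ∑ l, ξ l * (v i l : ℝ) := by
            rw [Finset.sum_comm]; congr 1; funext i; rw [Finset.mul_sum]
      _ = ∑ i, c i * a i := rfl
    -- right-hand side simplification
    have hfract : ∀ i, σ i + Int.fract (-σ i) = ((k i : ℤ) : ℝ) := by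
      intro i
      rw [Int.fract, Int.floor_neg, hkdef]
      push_cast
      ring
    have hsa : (∑ l, ξ l * s l) = ∑ i, σ i * a i := by
      rw [← hswap σ]
      congr 1
      funext l
      rw [← hrec s l]
    have hRHS : (Real.exp (∑ l, ξ l * s l) *
        ∏ i, Real.exp (Int.fract (-σ i) * a i) / (1 - Real.exp (a i)))
        = ∏ i, Real.exp ((k i : ℝ) * a i) / (1 - Real.exp (a i)) := by
      rw [hsa, Real.exp_sum, ← Finset.prod_mul_distrib]
      congr 1
      funext i
      rw [mul_div_assoc', ← Real.exp_add, ← add_mul, hfract i]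
    -- the equivalence
    have hkle : ∀ (m : Fin d → ℕ) (i : Fin d), k i ≤ k i + (m i : ℤ) :=
      fun m i => le_add_of_nonneg_right (Int.ofNat_nonneg _)
    let e : (Fin d → ℕ) ≃ {n : Fin d → ℤ // ∀ i, k i ≤ n i} :=
      { toFun := fun m => ⟨fun i => k i + (m i : ℤ), hkle m⟩
        invFun := fun n => fun i => (n.1 i - k i).toNat
        left_inv := by intro m; funext i; simp
        right_inv := by
          intro n
          apply Subtype.ext
          funext i
          simp only
          rw [Int.toNat_of_nonneg (sub_nonneg.mpr (n.2 i))]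
          ring }
    have main := aux_pi d (fun i n => Real.exp (((k i : ℝ) + (n : ℝ)) * a i))
      (fun i => Real.exp ((k i : ℝ) * a i) / (1 - Real.exp (a i)))
      (fun i n => (Real.exp_pos _).le)
      (fun i => aux_geom (a i) (hξ i) (k i))
    rw [hRHS]
    refine (Equiv.hasSum_iff e).mp ?_
    have hcomp : ((fun n : {n : Fin d → ℤ // ∀ i, k i ≤ n i} =>
        Real.exp (∑ l, ξ l * (∑ i, (n.1 i : ℝ) * (v i l : ℝ)))) ∘ e)
        = fun m : Fin d → ℕ => ∏ i, Real.exp (((k i : ℝ) + (m i : ℝ)) * a i) := by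
      funext m
      simp only [Function.comp_apply, e, Equiv.coe_fn_mk]
      have h1 : (∑ l, ξ l * ∑ i, ((k i + (m i : ℤ) : ℤ) : ℝ) * (v i l : ℝ))
          = ∑ i, ((k i : ℝ) + (m i : ℝ)) * a i := by
        rw [hswap (fun i => ((k i + (m i : ℤ) : ℤ) : ℝ))]
        congr 1
        funext i
        push_cast
        ring
      rw [h1, Real.exp_sum]
    rw [show ((fun n : {n : Fin d → ℤ // ∀ i, k i ≤ n i} =>
        Real.exp (∑ l, ξ l * (∑ i, (n.1 i : ℝ) * (v i l : ℝ)))) ∘ e)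
        = fun m : Fin d → ℕ => ∏ i, Real.exp (((k i : ℝ) + (m i : ℝ)) * a i) from hcomp]
    exact main
end

section
/- Let c ⊂ V = ℝ^d be a full-dimensional simplicial cone with edge generators v₁,…,v_d and facets q₁,…,q_d with primitive outer normal vectors ν₁,…,ν_d. Then for every ξ ∈ V* with ⟨ξ, v_i⟩ < 0 for all i and every v ∈ V with ⟨ξ, v⟩ ≠ 0, the identity ∫_c e^{⟨ξ,x⟩} dx = (1/⟨ξ,v⟩) ∑_{j=1}^d ⟨ν_j, v⟩ ∫_{q_j} e^{⟨ξ,x⟩} dx holds, where the facet integrals are with respect to the Lebesgue measure normalized by the induced lattice. -/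
open MeasureTheory
open scoped Classical

private lemma int_exp_Ioi' {a : ℝ} (ha : a < 0) :
    ∫ t in Set.Ioi (0:ℝ), Real.exp (a * t) = (-a)⁻¹ := by
  have hb : (0:ℝ) < -a := by linarith
  have h := MeasureTheory.integral_comp_mul_left_Ioi (fun x => Real.exp (-x)) 0 hb
  simp only [mul_zero, smul_eq_mul] at h
  rw [integral_exp_neg_Ioi_zero] at h
  have : ∀ t : ℝ, Real.exp (-(-a * t)) = Real.exp (a * t) := by intro t; ring_nf
  simp only [this, mul_one] at h
  exact h

private lemma pi_exp_integral' {ι : Type*} [Fintype ι] (a : ι → ℝ) (ha : ∀ i, a i < 0) :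
    ∫ t : ι → ℝ in Set.univ.pi (fun _ => Set.Ici (0:ℝ)),
      Real.exp (∑ i, a i * t i) = ∏ i, (-(a i))⁻¹ := by
  have hmeas : MeasurableSet (Set.univ.pi fun _ : ι => Set.Ici (0:ℝ)) :=
    MeasurableSet.univ_pi fun _ => measurableSet_Ici
  rw [← MeasureTheory.integral_indicator hmeas]
  have hind : ∀ t : ι → ℝ,
      (Set.univ.pi fun _ => Set.Ici (0:ℝ)).indicator
        (fun t : ι → ℝ => Real.exp (∑ i, a i * t i)) t
      = ∏ i, (Set.Ici (0:ℝ)).indicator (fun s => Real.exp (a i * s)) (t i) := by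
    intro t
    by_cases ht : t ∈ Set.univ.pi fun _ : ι => Set.Ici (0:ℝ)
    · rw [Set.indicator_of_mem ht, Real.exp_sum]
      refine Finset.prod_congr rfl fun i _ => ?_
      rw [Set.indicator_of_mem (ht i (Set.mem_univ i))]
    · rw [Set.indicator_of_notMem ht]
      rw [Set.mem_univ_pi] at ht
      push_neg at ht
      obtain ⟨i, hi⟩ := ht
      exact (Finset.prod_eq_zero (Finset.mem_univ i) (Set.indicator_of_notMem hi _)).symm
  simp_rw [hind]
  rw [MeasureTheory.integral_fintype_prod_volume_eq_prod
    (f := fun i => (Set.Ici (0:ℝ)).indicator (fun s => Real.exp (a i * s)))]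
  refine Finset.prod_congr rfl fun i _ => ?_
  rw [MeasureTheory.integral_indicator measurableSet_Ici,
    MeasureTheory.integral_Ici_eq_integral_Ioi, int_exp_Ioi' (ha i)]

/- Stokes/Brion formula for a full-dimensional rational simplicial cone
`c = cone(v₁,…,v_d)` with primitive outer facet normals `ν₁,…,ν_d`:
for `⟨ξ,vᵢ⟩ < 0` and `⟨ξ,u⟩ ≠ 0`,
`I(c)(ξ) = (1/⟨ξ,u⟩) ∑_j ⟨ν_j,u⟩ I(q_j)(ξ)`, where the cone integral is
`|det(v)| ∫_{t∈ℝ_{≥0}^d} e^{⟨ξ,∑ tᵢvᵢ⟩} dt` and the facet integral, with respect to the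
Lebesgue measure normalized by the induced lattice, is
`(|det(v)|/|⟨ν_j,v_j⟩|) ∫_{t∈ℝ_{≥0}^{d-1}} e^{⟨ξ,∑_{i≠j} tᵢvᵢ⟩} dt`. -/
theorem stmt_17 (d : ℕ) (hd : 0 < d) (v : Fin d → Fin d → ℤ)
    (hind : LinearIndependent ℝ fun i => fun l => ((v i l : ℤ) : ℝ))
    (ν : Fin d → Fin d → ℤ)
    (hprim : ∀ j, Finset.univ.gcd (fun l => (ν j l).natAbs) = 1)
    (hortho : ∀ j i, i ≠ j → (∑ l, (ν j l : ℝ) * (v i l : ℝ)) = 0)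
    (houter : ∀ j, (∑ l, (ν j l : ℝ) * (v j l : ℝ)) < 0)
    (ξ : Fin d → ℝ) (hξ : ∀ i, (∑ l, ξ l * (v i l : ℝ)) < 0)
    (u : Fin d → ℝ) (hu : (∑ l, ξ l * u l) ≠ 0) :
    |Matrix.det (Matrix.of fun i l => ((v i l : ℤ) : ℝ))| *
        ∫ t in Set.univ.pi (fun _ : Fin d => Set.Ici (0:ℝ)),
          Real.exp (∑ l, ξ l * (∑ i, t i * (v i l : ℝ)))
      = (1 / ∑ l, ξ l * u l) *
          ∑ j, (∑ l, (ν j l : ℝ) * u l) *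
            ((|Matrix.det (Matrix.of fun i l => ((v i l : ℤ) : ℝ))| /
                |∑ l, (ν j l : ℝ) * (v j l : ℝ)|) *
              ∫ t : {i : Fin d // i ≠ j} → ℝ in
                  Set.univ.pi (fun _ : {i : Fin d // i ≠ j} => Set.Ici (0:ℝ)),
                Real.exp (∑ l, ξ l * (∑ i : {i : Fin d // i ≠ j}, t i * (v i.1 l : ℝ)))) := by
  set a : Fin d → ℝ := fun i => ∑ l, ξ l * (v i l : ℝ) with ha_def
  set D : ℝ := |Matrix.det (Matrix.of fun i l => ((v i l : ℤ) : ℝ))| with hD_def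
  -- rewrite the integrands
  have hswap : ∀ (s : Finset (Fin d)) (t : Fin d → ℝ),
      (∑ l, ξ l * (∑ i ∈ s, t i * (v i l : ℝ))) = ∑ i ∈ s, (a i) * t i := by
    intro s t
    simp_rw [Finset.mul_sum]
    rw [Finset.sum_comm]
    refine Finset.sum_congr rfl fun i _ => ?_
    rw [ha_def, Finset.sum_mul]
    exact Finset.sum_congr rfl fun l _ => by ring
  have hI : (∫ t in Set.univ.pi (fun _ : Fin d => Set.Ici (0:ℝ)),
        Real.exp (∑ l, ξ l * (∑ i, t i * (v i l : ℝ))))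
      = ∏ i, (-(a i))⁻¹ := by
    have : ∀ t : Fin d → ℝ, Real.exp (∑ l, ξ l * (∑ i, t i * (v i l : ℝ)))
        = Real.exp (∑ i, (a i) * t i) := fun t => by rw [hswap Finset.univ t]
    simp_rw [this]
    exact pi_exp_integral' a hξ
  have hIj : ∀ j : Fin d, (∫ t : {i : Fin d // i ≠ j} → ℝ in
        Set.univ.pi (fun _ : {i : Fin d // i ≠ j} => Set.Ici (0:ℝ)),
        Real.exp (∑ l, ξ l * (∑ i : {i : Fin d // i ≠ j}, t i * (v i.1 l : ℝ))))
      = ∏ i : {i : Fin d // i ≠ j}, (-(a i.1))⁻¹ := by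
    intro j
    have hsw : ∀ t : {i : Fin d // i ≠ j} → ℝ,
        (∑ l, ξ l * (∑ i : {i : Fin d // i ≠ j}, t i * (v i.1 l : ℝ)))
        = ∑ i : {i : Fin d // i ≠ j}, (a i.1) * t i := by
      intro t
      simp_rw [Finset.mul_sum]
      rw [Finset.sum_comm]
      refine Finset.sum_congr rfl fun i _ => ?_
      rw [ha_def, Finset.sum_mul]
      exact Finset.sum_congr rfl fun l _ => by ring
    simp_rw [hsw]
    exact pi_exp_integral' (fun i : {i : Fin d // i ≠ j} => a i.1) (fun i => hξ i.1)
  rw [hI]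
  -- basis expansion of u
  have hcard : Fintype.card (Fin d) = Module.finrank ℝ (Fin d → ℝ) := by
    simp [Module.finrank_fin_fun]
  haveI : Nonempty (Fin d) := ⟨⟨0, hd⟩⟩
  set b := basisOfLinearIndependentOfCardEqFinrank hind hcard with hb_def
  have hb : ⇑b = fun i => fun l => ((v i l : ℤ) : ℝ) :=
    coe_basisOfLinearIndependentOfCardEqFinrank hind hcard
  set c : Fin d → ℝ := fun i => b.repr u i with hc_def
  have hurep : ∀ l, u l = ∑ i, c i * (v i l : ℝ) := by
    intro l
    have h := b.sum_repr u
    have h2 := congrFun h l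
    rw [Finset.sum_apply] at h2
    rw [← h2]
    refine Finset.sum_congr rfl fun i _ => ?_
    rw [Pi.smul_apply, hb, smul_eq_mul]
  set m : Fin d → ℝ := fun j => ∑ l, (ν j l : ℝ) * (v j l : ℝ) with hm_def
  have hN : ∀ j, (∑ l, (ν j l : ℝ) * u l) = c j * m j := by
    intro j
    simp_rw [hurep, Finset.mul_sum]
    rw [Finset.sum_comm]
    have : ∀ i : Fin d, (∑ l, (ν j l : ℝ) * (c i * (v i l : ℝ)))
        = c i * ∑ l, (ν j l : ℝ) * (v i l : ℝ) := by
      intro i; rw [Finset.mul_sum]; exact Finset.sum_congr rfl fun l _ => by ring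
    simp_rw [this]
    rw [Finset.sum_eq_single j (fun i _ hij => by rw [hortho j i hij, mul_zero])
      (fun h => absurd (Finset.mem_univ j) h)]
  have hS : (∑ l, ξ l * u l) = ∑ i, c i * a i := by
    simp_rw [hurep, Finset.mul_sum]
    rw [Finset.sum_comm]
    refine Finset.sum_congr rfl fun i _ => ?_
    rw [ha_def, Finset.mul_sum]
    exact Finset.sum_congr rfl fun l _ => by ring
  -- facet products
  have haneg : ∀ i, (0:ℝ) < -(a i) := fun i => by have := hξ i; rw [ha_def]; linarith
  have hprodj : ∀ j : Fin d, (∏ i : {i : Fin d // i ≠ j}, (-(a i.1))⁻¹)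
      = (-(a j)) * ∏ i, (-(a i))⁻¹ := by
    intro j
    have h1 : (∏ i ∈ Finset.univ.erase j, (-(a i))⁻¹)
        = ∏ i : {i : Fin d // i ≠ j}, (-(a i.1))⁻¹ :=
      Finset.prod_subtype (Finset.univ.erase j)
        (fun x => by simp [Finset.mem_erase]) (fun i => (-(a i))⁻¹)
    have h2 := Finset.mul_prod_erase Finset.univ (fun i => (-(a i))⁻¹) (Finset.mem_univ j)
    rw [← h1, ← h2]
    rw [← mul_assoc, mul_inv_cancel₀ (ne_of_gt (haneg j)), one_mul]
  -- now pure algebra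
  have hterm : ∀ j : Fin d, (∑ l, (ν j l : ℝ) * u l) *
      ((D / |∑ l, (ν j l : ℝ) * (v j l : ℝ)|) * ∏ i : {i : Fin d // i ≠ j}, (-(a i.1))⁻¹)
      = (c j * a j) * (D * ∏ i, (-(a i))⁻¹) := by
    intro j
    rw [hN j, hprodj j]
    have hmj := houter j
    rw [show |∑ l, (ν j l : ℝ) * (v j l : ℝ)| = -(m j) from abs_of_neg hmj]
    have hmj' : m j ≠ 0 := ne_of_lt hmj
    calc c j * m j * (D / -(m j) * (-a j * ∏ i, (-(a i))⁻¹))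
        = (c j * a j * (D * ∏ i, (-(a i))⁻¹)) * (m j * (m j)⁻¹) := by
          rw [div_eq_mul_inv, inv_neg]; ring
      _ = c j * a j * (D * ∏ i, (-(a i))⁻¹) := by rw [mul_inv_cancel₀ hmj', mul_one]
  calc D * ∏ i, (-(a i))⁻¹
      = (1 / ∑ l, ξ l * u l) * ((∑ j, c j * a j) * (D * ∏ i, (-(a i))⁻¹)) := by
        rw [← hS]; field_simp
    _ = (1 / ∑ l, ξ l * u l) * ∑ j, (c j * a j) * (D * ∏ i, (-(a i))⁻¹) := by
        rw [Finset.sum_mul]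
    _ = _ := by
        refine congrArg _ (Finset.sum_congr rfl fun j _ => ?_)
        rw [hIj j, hterm j]
end

section
/- Let v ∈ ℤ^d be a primitive lattice vector, let p : ℝ^d → ℝ^d/ℝv be the projection, and c ⊂ ℝ^d a rational simplicial full-dimensional cone with primitive edge generators v₁ = v, v₂, …, v_d. Then for ξ ∈ (ℝv)^⊥ ⊂ (ℝ^d)* and γ ∈ (ℤ^d)* with ⟨γ, v⟩ = 0, the restriction to v^⊥ of ⟨ξ', v⟩·I(c)(ξ' + 2πiγ) equals -I(p(c))(ξ + 2πiγ), where I(c)(η) = |det_{ℤ^d}(v₁,…,v_d)|·(-1)^d/∏_{j=1}^d ⟨η, v_j⟩ and I(p(c)) is computed with respect to the projected lattice p(ℤ^d); moreover if ⟨γ, v⟩ ≠ 0 the restriction is 0. -/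
open scoped Classical

set_option maxHeartbeats 800000

/- Residue formula: let `v_{j₀}` be a primitive lattice vector, an edge generator of a
rational simplicial full-dimensional cone `c = cone(v_1,…,v_d)`, with
`I(c)(η) = |det(v)|(-1)^d/∏_j ⟨η,v_j⟩`. For `ξ ∈ v_{j₀}^⊥` and `γ ∈ (ℤ^d)*`:
if `⟨γ,v_{j₀}⟩ = 0` then the restriction (limit) of `⟨ξ',v_{j₀}⟩·I(c)(ξ'+2πiγ)` at `ξ`
equals `-I(p(c))(ξ+2πiγ) = -(|det(v)|(-1)^{d-1}/∏_{j≠j₀}⟨ξ+2πiγ,v_j⟩)` (using the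
identification `|det_{ℤ^d}(v)| = |det_{p(ℤ^d)}(p v_j, j≠j₀)|` and `⟨·,p v_j⟩ = ⟨·,v_j⟩`
on `v_{j₀}^⊥`); if `⟨γ,v_{j₀}⟩ ≠ 0` the restriction is `0`. -/
theorem stmt_19 (d : ℕ) (hd : 0 < d) (j₀ : Fin d) (v : Fin d → Fin d → ℤ)
    (hprim : Finset.univ.gcd (fun l => (v j₀ l).natAbs) = 1)
    (hind : LinearIndependent ℝ fun i => fun l => ((v i l : ℤ) : ℝ))
    (γ : Fin d → ℤ) (ξ : Fin d → ℝ)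
    (hξv : (∑ l, ξ l * (v j₀ l : ℝ)) = 0)
    (hnz : ∀ i : Fin d, i ≠ j₀ →
      (((∑ l, ξ l * (v i l : ℝ)) : ℝ) : ℂ) +
        2 * Real.pi * Complex.I * ((∑ l, γ l * v i l : ℤ) : ℂ) ≠ 0) :
    ((∑ l, γ l * v j₀ l) = 0 →
      Filter.Tendsto
        (fun ξ' : Fin d → ℝ =>
          (((∑ l, ξ' l * (v j₀ l : ℝ)) : ℝ) : ℂ) *
            (((|Matrix.det (Matrix.of fun i l => ((v i l : ℤ) : ℝ))| : ℝ) : ℂ) * (-1) ^ d /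
              ∏ i, ((((∑ l, ξ' l * (v i l : ℝ)) : ℝ) : ℂ) +
                2 * Real.pi * Complex.I * ((∑ l, γ l * v i l : ℤ) : ℂ))))
        (nhdsWithin ξ {ξ' : Fin d → ℝ | ∀ i,
          (((∑ l, ξ' l * (v i l : ℝ)) : ℝ) : ℂ) +
            2 * Real.pi * Complex.I * ((∑ l, γ l * v i l : ℤ) : ℂ) ≠ 0})
        (nhds (-(((|Matrix.det (Matrix.of fun i l => ((v i l : ℤ) : ℝ))| : ℝ) : ℂ) *
            (-1) ^ (d - 1) /
          ∏ i ∈ Finset.univ.erase j₀,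
            ((((∑ l, ξ l * (v i l : ℝ)) : ℝ) : ℂ) +
              2 * Real.pi * Complex.I * ((∑ l, γ l * v i l : ℤ) : ℂ)))))) ∧
    ((∑ l, γ l * v j₀ l) ≠ 0 →
      Filter.Tendsto
        (fun ξ' : Fin d → ℝ =>
          (((∑ l, ξ' l * (v j₀ l : ℝ)) : ℝ) : ℂ) *
            (((|Matrix.det (Matrix.of fun i l => ((v i l : ℤ) : ℝ))| : ℝ) : ℂ) * (-1) ^ d /
              ∏ i, ((((∑ l, ξ' l * (v i l : ℝ)) : ℝ) : ℂ) +
                2 * Real.pi * Complex.I * ((∑ l, γ l * v i l : ℤ) : ℂ))))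
        (nhdsWithin ξ {ξ' : Fin d → ℝ | ∀ i,
          (((∑ l, ξ' l * (v i l : ℝ)) : ℝ) : ℂ) +
            2 * Real.pi * Complex.I * ((∑ l, γ l * v i l : ℤ) : ℂ) ≠ 0})
        (nhds 0)) := by
  set C : ℂ := ((|Matrix.det (Matrix.of fun i l => ((v i l : ℤ) : ℝ))| : ℝ) : ℂ) with hC
  set F : Fin d → (Fin d → ℝ) → ℂ := fun i ξ' =>
    (((∑ l, ξ' l * (v i l : ℝ)) : ℝ) : ℂ) +
      2 * Real.pi * Complex.I * ((∑ l, γ l * v i l : ℤ) : ℂ) with hF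
  have hFc : ∀ i, Continuous (F i) := by
    intro i
    apply Continuous.add _ continuous_const
    exact Complex.continuous_ofReal.comp
      (continuous_finset_sum _ fun l _ => (continuous_apply l).mul continuous_const)
  have hLc : Continuous (fun ξ' : Fin d → ℝ => (((∑ l, ξ' l * (v j₀ l : ℝ)) : ℝ) : ℂ)) :=
    Complex.continuous_ofReal.comp
      (continuous_finset_sum _ fun l _ => (continuous_apply l).mul continuous_const)
  constructor
  · intro hγ
    have hγc : ((∑ l, γ l * v j₀ l : ℤ) : ℂ) = 0 := by rw [hγ]; norm_cast
    have hFj₀ : ∀ ξ' : Fin d → ℝ, F j₀ ξ' = (((∑ l, ξ' l * (v j₀ l : ℝ)) : ℝ) : ℂ) := by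
      intro ξ'; simp only [hF]; rw [hγc, mul_zero, add_zero]
    have hPne : (∏ i ∈ Finset.univ.erase j₀, F i ξ) ≠ 0 :=
      Finset.prod_ne_zero_iff.2 fun i hi => hnz i (Finset.ne_of_mem_erase hi)
    have htend : Filter.Tendsto
        (fun ξ' : Fin d → ℝ => C * (-1) ^ d / ∏ i ∈ Finset.univ.erase j₀, F i ξ')
        (nhdsWithin ξ {ξ' : Fin d → ℝ | ∀ i, F i ξ' ≠ 0})
        (nhds (C * (-1) ^ d / ∏ i ∈ Finset.univ.erase j₀, F i ξ)) := by
      apply Filter.Tendsto.mono_left _ nhdsWithin_le_nhds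
      exact (Filter.Tendsto.div tendsto_const_nhds
        ((continuous_finset_prod _ fun i _ => hFc i).tendsto ξ) hPne)
    have hval : C * (-1) ^ d / ∏ i ∈ Finset.univ.erase j₀, F i ξ =
        -(C * (-1) ^ (d - 1) / ∏ i ∈ Finset.univ.erase j₀, F i ξ) := by
      have hpow : ((-1 : ℂ)) ^ d = -(-1) ^ (d - 1) := by
        obtain ⟨e, rfl⟩ := Nat.exists_eq_succ_of_ne_zero hd.ne'
        simp [pow_succ]
      rw [hpow]; ring
    rw [hval] at htend
    refine htend.congr' ?_
    filter_upwards [self_mem_nhdsWithin] with ξ' hξ'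
    have h0 : F j₀ ξ' ≠ 0 := hξ' j₀
    rw [hFj₀] at h0
    have hsplit : (∏ i, F i ξ') = F j₀ ξ' * ∏ i ∈ Finset.univ.erase j₀, F i ξ' :=
      (Finset.mul_prod_erase Finset.univ _ (Finset.mem_univ j₀)).symm
    show C * (-1) ^ d / ∏ i ∈ Finset.univ.erase j₀, F i ξ' =
      (((∑ l, ξ' l * (v j₀ l : ℝ)) : ℝ) : ℂ) * (C * (-1) ^ d / ∏ i, F i ξ')
    rw [hsplit, hFj₀, ← mul_div_assoc, mul_div_mul_left _ _ h0]
  · intro hγ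
    have hPne : (∏ i, F i ξ) ≠ 0 := by
      refine Finset.prod_ne_zero_iff.2 fun i _ => ?_
      by_cases h : i = j₀
      · subst h
        simp only [hF, hξv]
        simp only [Complex.ofReal_zero, zero_add]
        refine mul_ne_zero (mul_ne_zero (mul_ne_zero two_ne_zero ?_) Complex.I_ne_zero) ?_
        · exact_mod_cast Real.pi_ne_zero
        · exact_mod_cast hγ
      · exact hnz i h
    have : Filter.Tendsto
        (fun ξ' : Fin d → ℝ =>
          (((∑ l, ξ' l * (v j₀ l : ℝ)) : ℝ) : ℂ) * (C * (-1) ^ d / ∏ i, F i ξ'))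
        (nhds ξ)
        (nhds ((((∑ l, ξ l * (v j₀ l : ℝ)) : ℝ) : ℂ) * (C * (-1) ^ d / ∏ i, F i ξ))) := by
      refine Filter.Tendsto.mul (hLc.tendsto ξ) ?_
      exact Filter.Tendsto.div tendsto_const_nhds
        ((continuous_finset_prod _ fun i _ => hFc i).tendsto ξ) hPne
    rw [hξv] at this
    simpa only [Complex.ofReal_zero, zero_mul] using this.mono_left nhdsWithin_le_nhds
end
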